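/- Over a field of characteristic 0, the singular locus of the quartic surface D = 0 in P^3 is exactly the twisted cubic: a point P = (x0:x1:x2:x3) with D(P) = 0 satisfies all four partial derivatives of D vanishing at P if and only if P = (t0^3 : t0^2*t1 : t0*t1^2 : t1^3) for some (t0:t1) ∈ P^1. -/

import Mathlib

open MvPolynomial in
/-- The discriminant quartic as a polynomial in four variables. -/
noncomputable def Dpoly (k : Type*) [Field k] : MvPolynomial (Fin 4) k :=
  X 0 ^ 2 * X 3 ^ 2 - 3 * X 1 ^ 2 * X 2 ^ 2 - 6 * X 0 * X 1 * X 2 * X 3 +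
    4 * X 0 * X 2 ^ 3 + 4 * X 3 * X 1 ^ 3

open MvPolynomial

lemma pd3' {k : Type*} [Field k] (i : Fin 4) : pderiv i ((3 : MvPolynomial (Fin 4) k)) = 0 := by
  rw [← map_ofNat (C : k →+* MvPolynomial (Fin 4) k) 3, pderiv_C]
lemma pd4' {k : Type*} [Field k] (i : Fin 4) : pderiv i ((4 : MvPolynomial (Fin 4) k)) = 0 := by
  rw [← map_ofNat (C : k →+* MvPolynomial (Fin 4) k) 4, pderiv_C]
lemma pd6' {k : Type*} [Field k] (i : Fin 4) : pderiv i ((6 : MvPolynomial (Fin 4) k)) = 0 := by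
  rw [← map_ofNat (C : k →+* MvPolynomial (Fin 4) k) 6, pderiv_C]

lemma evalD' {k : Type*} [Field k] (x : Fin 4 → k) :
    eval x (Dpoly k) = x 0 ^ 2 * x 3 ^ 2 - 3 * x 1 ^ 2 * x 2 ^ 2 - 6 * x 0 * x 1 * x 2 * x 3 +
      4 * x 0 * x 2 ^ 3 + 4 * x 3 * x 1 ^ 3 := by
  simp [Dpoly]

lemma evalP0 {k : Type*} [Field k] (x : Fin 4 → k) :
    eval x (pderiv 0 (Dpoly k)) = 2 * x 0 * x 3 ^ 2 - 6 * x 1 * x 2 * x 3 + 4 * x 2 ^ 3 := by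
  simp [Dpoly, pderiv_mul, pderiv_pow, Pi.single_apply, pd3', pd4', pd6']; ring

lemma evalP1 {k : Type*} [Field k] (x : Fin 4 → k) :
    eval x (pderiv 1 (Dpoly k)) = -6 * x 1 * x 2 ^ 2 - 6 * x 0 * x 2 * x 3 + 12 * x 3 * x 1 ^ 2 := by
  simp [Dpoly, pderiv_mul, pderiv_pow, Pi.single_apply, pd3', pd4', pd6']; ring

lemma evalP2 {k : Type*} [Field k] (x : Fin 4 → k) :
    eval x (pderiv 2 (Dpoly k)) = -6 * x 1 ^ 2 * x 2 - 6 * x 0 * x 1 * x 3 + 12 * x 0 * x 2 ^ 2 := by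
  simp [Dpoly, pderiv_mul, pderiv_pow, Pi.single_apply, pd3', pd4', pd6']; ring

lemma evalP3 {k : Type*} [Field k] (x : Fin 4 → k) :
    eval x (pderiv 3 (Dpoly k)) = 2 * x 0 ^ 2 * x 3 - 6 * x 0 * x 1 * x 2 + 4 * x 1 ^ 3 := by
  simp [Dpoly, pderiv_mul, pderiv_pow, Pi.single_apply, pd3', pd4', pd6']; ring

open MvPolynomial in
/-- Over an algebraically closed field of characteristic zero, the singular locus of the
quartic surface `D = 0` in `P^3` is exactly the twisted cubic. -/
theorem singular_locus_is_twisted_cubic {k : Type*} [Field k] [IsAlgClosed k]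
    [CharZero k] (x : Fin 4 → k) (hx : x ≠ 0) (hD : eval x (Dpoly k) = 0) :
    (∀ i : Fin 4, eval x (pderiv i (Dpoly k)) = 0) ↔
      ∃ t0 t1 : k, x = ![t0 ^ 3, t0 ^ 2 * t1, t0 * t1 ^ 2, t1 ^ 3] := by
  rw [evalD'] at hD
  constructor
  · intro h
    have h0 := h 0; rw [evalP0] at h0
    have h1 := h 1; rw [evalP1] at h1
    have h2 := h 2; rw [evalP2] at h2
    have h3 := h 3; rw [evalP3] at h3
    -- C*A = 0
    have hca : (x 0 * x 3 - x 1 * x 2) * (x 1 ^ 2 - x 0 * x 2) = 0 := by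
      linear_combination (-(x 1) / 6) * h2 + (-(x 2) / 2) * h3
    have hcb : (x 0 * x 3 - x 1 * x 2) * (x 2 ^ 2 - x 1 * x 3) = 0 := by
      linear_combination (-(x 2) / 6) * h1 + (-(x 1) / 2) * h0
    have hc : x 0 * x 3 - x 1 * x 2 = 0 := by
      have h3' : (x 0 * x 3 - x 1 * x 2) ^ 3 = 0 := by
        linear_combination (x 0 * x 3 - x 1 * x 2) * hD + 4 * (x 2 ^ 2 - x 1 * x 3) * hca
      exact pow_eq_zero_iff (by norm_num) |>.mp h3'
    have ha1 : (x 1 ^ 2 - x 0 * x 2) * x 1 = 0 := by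
      linear_combination (1 / 4 : k) * h3 - (x 0 / 2) * hc
    have ha2 : (x 1 ^ 2 - x 0 * x 2) * x 2 = 0 := by
      linear_combination (-1 / 12 : k) * h2 - (x 1 / 2) * hc
    have hb1 : (x 2 ^ 2 - x 1 * x 3) * x 1 = 0 := by
      linear_combination (-1 / 12 : k) * h1 - (x 2 / 2) * hc
    have hb2 : (x 2 ^ 2 - x 1 * x 3) * x 2 = 0 := by
      linear_combination (1 / 4 : k) * h0 - (x 3 / 2) * hc
    have ha : x 1 ^ 2 - x 0 * x 2 = 0 := by
      by_contra h'
      have e1 : x 1 = 0 := (mul_eq_zero.mp ha1).resolve_left h'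
      have e2 : x 2 = 0 := (mul_eq_zero.mp ha2).resolve_left h'
      apply h'; rw [e1, e2]; ring
    have hb : x 2 ^ 2 - x 1 * x 3 = 0 := by
      by_contra h'
      have e1 : x 1 = 0 := (mul_eq_zero.mp hb1).resolve_left h'
      have e2 : x 2 = 0 := (mul_eq_zero.mp hb2).resolve_left h'
      apply h'; rw [e1, e2]; ring
    by_cases h0' : x 0 = 0
    · have e1 : x 1 = 0 := by
        have : x 1 ^ 2 = 0 := by linear_combination ha + x 2 * h0'
        exact pow_eq_zero_iff (by norm_num) |>.mp this
      have e2 : x 2 = 0 := by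
        have : x 2 ^ 2 = 0 := by linear_combination hb + x 3 * e1
        exact pow_eq_zero_iff (by norm_num) |>.mp this
      obtain ⟨t1, ht1⟩ := IsAlgClosed.exists_pow_nat_eq (x 3) (n := 3) (by norm_num)
      refine ⟨0, t1, funext fun i => ?_⟩
      fin_cases i <;> simp [h0', e1, e2, ht1.symm]
    · obtain ⟨t0, ht0⟩ := IsAlgClosed.exists_pow_nat_eq (x 0) (n := 3) (by norm_num)
      have ht0' : t0 ≠ 0 := by
        intro hz; apply h0'; rw [← ht0, hz]; ring
      refine ⟨t0, x 1 / t0 ^ 2, funext fun i => ?_⟩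
      fin_cases i
      · simpa using ht0.symm
      · show x 1 = t0 ^ 2 * (x 1 / t0 ^ 2)
        field_simp
      · show x 2 = t0 * (x 1 / t0 ^ 2) ^ 2
        field_simp
        linear_combination (-1) * ha + x 2 * ht0
      · show x 3 = (x 1 / t0 ^ 2) ^ 3
        field_simp
        linear_combination (x 3 * (t0 ^ 3 + x 0)) * ht0 - x 1 * ha + x 0 * hc
  · rintro ⟨t0, t1, rfl⟩ i
    fin_cases i
    · show eval _ (pderiv 0 (Dpoly k)) = 0
      rw [evalP0]; simp; ring
    · show eval _ (pderiv 1 (Dpoly k)) = 0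
      rw [evalP1]; simp; ring
    · show eval _ (pderiv 2 (Dpoly k)) = 0
      rw [evalP2]; simp; ring
    · show eval _ (pderiv 3 (Dpoly k)) = 0
      rw [evalP3]; simp; ring
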